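/- Let n ≥ 5 be odd, and let 𝒜 be the circulant n×n symmetric matrix with entries 𝒜ᵢⱼ = α if i = j, β if |i−j| ∈ {1, n−1}, 1 if |i−j| ∈ {2, n−2}, and 0 otherwise, where α = 2(1 + 2cos(π/(n+1))cos(3π/(n+1))) and β = −2(cos(π/(n+1)) + cos(3π/(n+1))). Suppose u ∈ ℝ^{n−2} is a positive vector and j ∈ [n] is such that the vector τʲ with support I(j) := [n] \ {n−j, n−j+1} (for j ≤ n−1; I(n) := [n]\{1,n}) and entries u on I(j) satisfies ∑_{k∈I(j)} 𝒜ᵢₖ uₖ = 0 for all i ∈ I(j) and ∑_{k∈I(j)} 𝒜ᵢₖ uₖ = λᵢ ≥ 0 for i ∉ I(j). Then λᵢ > 0 for i ∉ I(j); i.e., supp(𝒜τʲ) = [n] \ I(j). -/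

import Mathlib

open Matrix Real

/-- The Hildebrand-type circulant matrix: `𝒜ᵢⱼ = α` if `i = j`, `β` if
`|i − j| ∈ {1, n−1}`, `1` if `|i − j| ∈ {2, n−2}`, and `0` otherwise, where
`α = 2(1 + 2cos(π/(n+1))cos(3π/(n+1)))` and
`β = −2(cos(π/(n+1)) + cos(3π/(n+1)))`. -/
noncomputable def hilA (n : ℕ) : Matrix (Fin n) (Fin n) ℝ :=
  Matrix.of fun i j =>
    if i = j then 2 * (1 + 2 * Real.cos (π / (n + 1)) * Real.cos (3 * π / (n + 1)))
    else if max i.val j.val - min i.val j.val = 1 ∨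
            max i.val j.val - min i.val j.val = n - 1 then
      -2 * (Real.cos (π / (n + 1)) + Real.cos (3 * π / (n + 1)))
    else if max i.val j.val - min i.val j.val = 2 ∨
            max i.val j.val - min i.val j.val = n - 2 then 1
    else 0

/-- Enumeration (in increasing order) of the index set `I(j)`, which is `[n]`
(0-based) with two "cyclically consecutive" indices removed: for a 1-based
`j ∈ [n−1]` (`j.val < n − 1` in 0-based terms) the removed indices are
`{n−j, n−j+1}` (1-based) and for `j = n` they are `{1, n}` (1-based). -/
def embIdx (n : ℕ) (j : Fin n) (k : Fin (n - 2)) : Fin n :=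
  if _ : j.val = n - 1 then ⟨k.val + 1, by have := k.isLt; omega⟩
  else if _ : k.val < n - 2 - j.val then ⟨k.val, by have := k.isLt; omega⟩
  else ⟨k.val + 2, by have := k.isLt; omega⟩

namespace HilAux

lemma fin_val_one (n : ℕ) [NeZero n] (hn : 5 ≤ n) : (1 : Fin n).val = 1 := by
  rw [Fin.val_one']; exact Nat.mod_eq_of_lt (by omega)

lemma fin_val_two (n : ℕ) [NeZero n] (hn : 5 ≤ n) : (2 : Fin n).val = 2 := by
  rw [show (2 : Fin n) = 1 + 1 from Fin.ext (by rw [Fin.add_def, fin_val_one n hn]; rfl), Fin.add_def, fin_val_one n hn]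
  exact Nat.mod_eq_of_lt (by omega)

lemma fin_one_ne_zero (n : ℕ) [NeZero n] (hn : 5 ≤ n) : (1 : Fin n) ≠ 0 := by
  intro h
  have := congrArg Fin.val h
  rw [fin_val_one n hn, Fin.val_zero] at this
  omega

lemma fin_two_ne_zero (n : ℕ) [NeZero n] (hn : 5 ≤ n) : (2 : Fin n) ≠ 0 := by
  intro h
  have := congrArg Fin.val h
  rw [fin_val_two n hn, Fin.val_zero] at this
  omega

lemma fin_two_ne_one (n : ℕ) [NeZero n] (hn : 5 ≤ n) : (2 : Fin n) ≠ 1 := by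
  intro h
  have := congrArg Fin.val h
  rw [fin_val_two n hn, fin_val_one n hn] at this
  omega

lemma key_arith (n iv pv q1 s1 q2 s2 : ℕ) (hn : 5 ≤ n) (hi : iv < n) (hp : pv < n)
    (hq1 : q1 < n) (hq2 : q2 < n) (hs1 : s1 < n) (hs2 : s2 < n)
    (B1 : q1 = pv + 1 ∨ q1 + n = pv + 1)
    (B2 : q2 = pv + 2 ∨ q2 + n = pv + 2)
    (B3 : s1 + 1 = pv + n ∨ s1 + 1 = pv)
    (B4 : s2 + 2 = pv + n ∨ s2 + 2 = pv) :
    ((max iv pv - min iv pv = 1 ∨ max iv pv - min iv pv = n - 1) ↔ (iv = q1 ∨ iv = s1))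
    ∧ ((max iv pv - min iv pv = 2 ∨ max iv pv - min iv pv = n - 2) ↔ (iv = q2 ∨ iv = s2))
    ∧ ¬(iv = pv ∧ iv = q1) ∧ ¬(iv = pv ∧ iv = s1) ∧ ¬(iv = pv ∧ iv = q2) ∧ ¬(iv = pv ∧ iv = s2)
    ∧ ¬(iv = q1 ∧ iv = s1) ∧ ¬(iv = q1 ∧ iv = q2) ∧ ¬(iv = q1 ∧ iv = s2)
    ∧ ¬(iv = s1 ∧ iv = q2) ∧ ¬(iv = s1 ∧ iv = s2) ∧ ¬(iv = q2 ∧ iv = s2) := by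
  omega

lemma hilA_eq_sum (n : ℕ) [NeZero n] (hn : 5 ≤ n) (i p : Fin n) :
    hilA n i p =
      (if i = p then 2 * (1 + 2 * Real.cos (π / (n + 1)) * Real.cos (3 * π / (n + 1))) else 0)
      + (if i = p + 1 then -2 * (Real.cos (π / (n + 1)) + Real.cos (3 * π / (n + 1))) else 0)
      + (if i = p - 1 then -2 * (Real.cos (π / (n + 1)) + Real.cos (3 * π / (n + 1))) else 0)
      + (if i = p + 2 then (1:ℝ) else 0)
      + (if i = p - 2 then (1:ℝ) else 0) := by
  have v1 : (1 : Fin n).val = 1 := fin_val_one n hn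
  have v2 : (2 : Fin n).val = 2 := fin_val_two n hn
  have hi := i.isLt; have hp := p.isLt
  have A1 : (p + 1).val = (p.val + 1) % n := by rw [Fin.add_def, v1]
  have A2 : (p + 2).val = (p.val + 2) % n := by rw [Fin.add_def, v2]
  have S1 : (p - 1).val = (p.val + (n - 1)) % n := by rw [Fin.sub_def, v1, Nat.add_comm]
  have S2 : (p - 2).val = (p.val + (n - 2)) % n := by rw [Fin.sub_def, v2, Nat.add_comm]
  have hq1 := (p+1).isLt; have hq2 := (p+2).isLt; have hs1 := (p-1).isLt; have hs2 := (p-2).isLt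
  simp only [hilA, Matrix.of_apply, Fin.ext_iff]
  obtain ⟨iv, ei⟩ : ∃ m, i.val = m := ⟨_, rfl⟩
  obtain ⟨pv, ep⟩ : ∃ m, p.val = m := ⟨_, rfl⟩
  obtain ⟨q1, e1⟩ : ∃ m, (p+1).val = m := ⟨_, rfl⟩
  obtain ⟨q2, e2⟩ : ∃ m, (p+2).val = m := ⟨_, rfl⟩
  obtain ⟨s1, e3⟩ : ∃ m, (p-1).val = m := ⟨_, rfl⟩
  obtain ⟨s2, e4⟩ : ∃ m, (p-2).val = m := ⟨_, rfl⟩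
  rw [ei] at hi
  rw [ep] at hp
  rw [ep] at A1 A2 S1 S2
  rw [e1] at A1 hq1
  rw [e2] at A2 hq2
  rw [e3] at S1 hs1
  rw [e4] at S2 hs2
  rw [ei, ep, e1, e2, e3, e4]
  have B1 : q1 = pv + 1 ∨ q1 + n = pv + 1 := by
    rcases Nat.lt_or_ge (pv + 1) n with h | h
    · exact Or.inl (by rw [A1, Nat.mod_eq_of_lt h])
    · right; rw [A1, Nat.mod_eq_sub_mod h, Nat.mod_eq_of_lt (by omega)]; omega
  have B2 : q2 = pv + 2 ∨ q2 + n = pv + 2 := by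
    rcases Nat.lt_or_ge (pv + 2) n with h | h
    · exact Or.inl (by rw [A2, Nat.mod_eq_of_lt h])
    · right; rw [A2, Nat.mod_eq_sub_mod h, Nat.mod_eq_of_lt (by omega)]; omega
  have B3 : s1 + 1 = pv + n ∨ s1 + 1 = pv := by
    rcases Nat.lt_or_ge (pv + (n - 1)) n with h | h
    · left; rw [S1, Nat.mod_eq_of_lt h]; omega
    · right; rw [S1, Nat.mod_eq_sub_mod h, Nat.mod_eq_of_lt (by omega)]; omega
  have B4 : s2 + 2 = pv + n ∨ s2 + 2 = pv := by
    rcases Nat.lt_or_ge (pv + (n - 2)) n with h | h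
    · left; rw [S2, Nat.mod_eq_of_lt h]; omega
    · right; rw [S2, Nat.mod_eq_sub_mod h, Nat.mod_eq_of_lt (by omega)]; omega
  obtain ⟨hiff1, hiff2, d01, d02, d03, d04, d12, d13, d14, d23, d24, d34⟩ :=
    key_arith n iv pv q1 s1 q2 s2 hn hi hp hq1 hq2 hs1 hs2 B1 B2 B3 B4
  rw [if_congr hiff1 rfl rfl, if_congr hiff2 rfl rfl]
  clear A1 A2 S1 S2 B1 B2 B3 B4 hq1 hq2 hs1 hs2 v1 v2 hi hp hn ei ep e1 e2 e3 e4 hiff1 hiff2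
  generalize 2 * (1 + 2 * Real.cos (π / (↑n + 1)) * Real.cos (3 * π / (↑n + 1))) = a
  generalize -2 * (Real.cos (π / (↑n + 1)) + Real.cos (3 * π / (↑n + 1))) = b
  by_cases h0 : iv = pv
  · rw [if_pos h0, if_pos h0, if_neg (fun h => d01 ⟨h0, h⟩), if_neg (fun h => d02 ⟨h0, h⟩),
        if_neg (fun h => d03 ⟨h0, h⟩), if_neg (fun h => d04 ⟨h0, h⟩)]
    ring1
  by_cases h1 : iv = q1
  · rw [if_neg h0, if_pos (Or.inl h1), if_neg h0, if_pos h1, if_neg (fun h => d12 ⟨h1, h⟩),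
        if_neg (fun h => d13 ⟨h1, h⟩), if_neg (fun h => d14 ⟨h1, h⟩)]
    ring1
  by_cases h2 : iv = s1
  · rw [if_neg h0, if_pos (Or.inr h2), if_neg h0, if_neg h1, if_pos h2,
        if_neg (fun h => d23 ⟨h2, h⟩), if_neg (fun h => d24 ⟨h2, h⟩)]
    ring1
  by_cases h3 : iv = q2
  · rw [if_neg h0, if_neg (fun h => h.elim h1 h2), if_pos (Or.inl h3),
        if_neg h0, if_neg h1, if_neg h2, if_pos h3, if_neg (fun h => d34 ⟨h3, h⟩)]
    ring1
  by_cases h4 : iv = s2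
  · rw [if_neg h0, if_neg (fun h => h.elim h1 h2), if_pos (Or.inr h4),
        if_neg h0, if_neg h1, if_neg h2, if_neg h3, if_pos h4]
    ring1
  · rw [if_neg h0, if_neg (fun h => h.elim h1 h2), if_neg (fun h => h.elim h3 h4),
        if_neg h0, if_neg h1, if_neg h2, if_neg h3, if_neg h4]
    ring1


lemma hilA_symm (n : ℕ) (i p : Fin n) : hilA n p i = hilA n i p := by
  rcases eq_or_ne i p with h | h
  · rw [h]
  · simp only [hilA, Matrix.of_apply, if_neg h, if_neg (Ne.symm h),
      max_comm p.val i.val, min_comm p.val i.val]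

lemma hilA_shift (n : ℕ) [NeZero n] (hn : 5 ≤ n) (i p : Fin n) :
    hilA n (i + 1) (p + 1) = hilA n i p := by
  rw [hilA_eq_sum n hn, hilA_eq_sum n hn]
  have c1 : (i + 1 = p + 1) ↔ (i = p) := add_left_inj 1
  have c2 : (i + 1 = p + 1 + 1) ↔ (i = p + 1) := add_left_inj 1
  have c3 : (i + 1 = p + 1 - 1) ↔ (i = p - 1) := by
    rw [add_sub_cancel_right]
    exact (eq_sub_iff_add_eq (c := 1)).symm
  have c4 : (i + 1 = p + 1 + 2) ↔ (i = p + 2) := by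
    rw [show p + 1 + 2 = p + 2 + 1 by abel]
    exact add_left_inj 1
  have c5 : (i + 1 = p + 1 - 2) ↔ (i = p - 2) := by
    rw [show p + 1 - 2 = p - 2 + 1 by abel]
    exact add_left_inj 1
  rw [if_congr c1 rfl rfl, if_congr c2 rfl rfl, if_congr c3 rfl rfl,
      if_congr c4 rfl rfl, if_congr c5 rfl rfl]

lemma mulVec_shift (n : ℕ) [NeZero n] (hn : 5 ≤ n) (τ : Fin n → ℝ) (i : Fin n) :
    (hilA n).mulVec (fun p => τ (p + 1)) i = (hilA n).mulVec τ (i + 1) := by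
  simp only [Matrix.mulVec, dotProduct]
  rw [← Equiv.sum_comp (Equiv.addRight (1 : Fin n)) (fun q => hilA n (i + 1) q * τ q)]
  refine Finset.sum_congr rfl fun p _ => ?_
  simp only [Equiv.coe_addRight]
  rw [hilA_shift n hn]

lemma hilA_pairing (n : ℕ) (σ τ : Fin n → ℝ) :
    ∑ i, σ i * (hilA n).mulVec τ i = ∑ i, (hilA n).mulVec σ i * τ i := by
  simp only [Matrix.mulVec, dotProduct, Finset.mul_sum, Finset.sum_mul]
  rw [Finset.sum_comm]
  refine Finset.sum_congr rfl fun p _ => Finset.sum_congr rfl fun i _ => ?_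
  rw [hilA_symm n p i]
  ring

lemma hilA_colsum (n : ℕ) [NeZero n] (hn : 5 ≤ n) (p : Fin n) :
    ∑ i, hilA n i p =
      2 * (1 + 2 * Real.cos (π / (n + 1)) * Real.cos (3 * π / (n + 1)))
        + 2 * (-2 * (Real.cos (π / (n + 1)) + Real.cos (3 * π / (n + 1)))) + 2 := by
  rw [Finset.sum_congr rfl fun i _ => hilA_eq_sum n hn i p]
  simp only [Finset.sum_add_distrib, Finset.sum_ite_eq', Finset.mem_univ, if_true]
  ring

lemma hilA_sum_mulVec (n : ℕ) [NeZero n] (hn : 5 ≤ n) (τ : Fin n → ℝ) :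
    ∑ i, (hilA n).mulVec τ i =
      (2 * (1 + 2 * Real.cos (π / (n + 1)) * Real.cos (3 * π / (n + 1)))
        + 2 * (-2 * (Real.cos (π / (n + 1)) + Real.cos (3 * π / (n + 1)))) + 2) * ∑ p, τ p := by
  simp only [Matrix.mulVec, dotProduct]
  rw [Finset.sum_comm, Finset.mul_sum]
  refine Finset.sum_congr rfl fun p _ => ?_
  rw [← Finset.sum_mul, hilA_colsum n hn]

def missIdx1 (n : ℕ) (j : Fin n) : Fin n :=
  ⟨if j.val = n - 1 then n - 1 else n - 2 - j.val, by have := j.pos; split <;> omega⟩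

def missIdx2 (n : ℕ) (j : Fin n) : Fin n :=
  ⟨if j.val = n - 1 then 0 else n - 1 - j.val, by have := j.pos; split <;> omega⟩

lemma missIdx2_eq (n : ℕ) [NeZero n] (hn : 5 ≤ n) (j : Fin n) :
    missIdx2 n j = missIdx1 n j + 1 := by
  have hj := j.isLt
  apply Fin.ext
  rw [Fin.add_def, fin_val_one n hn]
  show (if j.val = n - 1 then 0 else n - 1 - j.val)
      = ((if j.val = n - 1 then n - 1 else n - 2 - j.val) + 1) % n
  by_cases h : j.val = n - 1
  · rw [if_pos h, if_pos h, show n - 1 + 1 = n by omega, Nat.mod_self]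
  · rw [if_neg h, if_neg h, Nat.mod_eq_of_lt (by omega)]; omega

lemma emb_ne_miss (n : ℕ) (hn : 5 ≤ n) (j : Fin n) (k : Fin (n - 2)) :
    embIdx n j k ≠ missIdx1 n j ∧ embIdx n j k ≠ missIdx2 n j := by
  have hk := k.isLt; have hj := j.isLt
  unfold embIdx missIdx1 missIdx2
  constructor <;> (split_ifs <;> (intro h; rw [Fin.mk.injEq] at h; omega))

lemma emb_surj (n : ℕ) (hn : 5 ≤ n) (j : Fin n) (i : Fin n)
    (h1 : i ≠ missIdx1 n j) (h2 : i ≠ missIdx2 n j) : ∃ k, embIdx n j k = i := by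
  have hi := i.isLt; have hj := j.isLt
  have h1v : i.val ≠ (missIdx1 n j).val := fun h => h1 (Fin.ext h)
  have h2v : i.val ≠ (missIdx2 n j).val := fun h => h2 (Fin.ext h)
  rw [show (missIdx1 n j).val = if j.val = n - 1 then n - 1 else n - 2 - j.val from rfl] at h1v
  rw [show (missIdx2 n j).val = if j.val = n - 1 then 0 else n - 1 - j.val from rfl] at h2v
  by_cases hj1 : j.val = n - 1
  · rw [if_pos hj1] at h1v; rw [if_pos hj1] at h2v
    refine ⟨⟨i.val - 1, by omega⟩, ?_⟩
    unfold embIdx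
    rw [dif_pos hj1]
    exact Fin.ext (show i.val - 1 + 1 = i.val by omega)
  · rw [if_neg hj1] at h1v; rw [if_neg hj1] at h2v
    by_cases hlt : i.val < n - 2 - j.val
    · refine ⟨⟨i.val, by omega⟩, ?_⟩
      unfold embIdx
      rw [dif_neg hj1, dif_pos hlt]
    · refine ⟨⟨i.val - 2, by omega⟩, ?_⟩
      unfold embIdx
      rw [dif_neg hj1, dif_neg (show ¬((⟨i.val - 2, by omega⟩ : Fin (n-2)).val < n - 2 - j.val) by
        show ¬(i.val - 2 < n - 2 - j.val); omega)]
      exact Fin.ext (show i.val - 2 + 2 = i.val by omega)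

lemma emb_inj (n : ℕ) (j : Fin n) : Function.Injective (embIdx n j) := by
  intro x y h
  have hx := x.isLt; have hy := y.isLt
  unfold embIdx at h
  split_ifs at h <;> (rw [Fin.mk.injEq] at h; exact Fin.ext (by omega))

lemma const_pos (n : ℕ) (hn : 5 ≤ n) :
    0 < 2 * (1 + 2 * Real.cos (π / (n + 1)) * Real.cos (3 * π / (n + 1)))
        + 2 * (-2 * (Real.cos (π / (n + 1)) + Real.cos (3 * π / (n + 1)))) + 2 := by
  have hn5 : (5:ℝ) ≤ (n:ℝ) := by exact_mod_cast hn
  have hn1 : (0:ℝ) < (n:ℝ) + 1 := by linarith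
  have h1 : 0 < π / ((n:ℝ) + 1) := div_pos Real.pi_pos hn1
  have h1' : π / ((n:ℝ) + 1) < 2 * π := by
    rw [div_lt_iff₀ hn1]; nlinarith [Real.pi_pos]
  have h3 : 0 < 3 * π / ((n:ℝ) + 1) := div_pos (by nlinarith [Real.pi_pos]) hn1
  have h3' : 3 * π / ((n:ℝ) + 1) < 2 * π := by
    rw [div_lt_iff₀ hn1]; nlinarith [Real.pi_pos]
  have c1lt : Real.cos (π / ((n:ℝ) + 1)) < 1 := by
    refine lt_of_le_of_ne (Real.cos_le_one _) (fun h => ?_)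
    have := (Real.cos_eq_one_iff_of_lt_of_lt (by linarith) h1').mp h
    linarith
  have c2lt : Real.cos (3 * π / ((n:ℝ) + 1)) < 1 := by
    refine lt_of_le_of_ne (Real.cos_le_one _) (fun h => ?_)
    have := (Real.cos_eq_one_iff_of_lt_of_lt (by linarith) h3').mp h
    linarith
  nlinarith [mul_pos (sub_pos.2 c1lt) (sub_pos.2 c2lt)]

end HilAux

open HilAux

/-- For odd `n ≥ 5`: if `τ` is supported on `I(j)` with positive palindromic
entries `u` there, `(𝒜τ)ᵢ = 0` for `i ∈ I(j)` and `(𝒜τ)ᵢ = λᵢ ≥ 0` for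
`i ∉ I(j)`, then `λᵢ > 0` for every `i ∉ I(j)`; i.e.
`supp(𝒜τ) = [n] \ I(j)`. -/
theorem hilA_mulVec_pos_off_support (n : ℕ) (hn : 5 ≤ n) (hodd : Odd n)
    (j : Fin n) (u : Fin (n - 2) → ℝ) (hu : ∀ k, 0 < u k)
    (hpal : ∀ k : Fin (n - 2), u k = u ⟨n - 3 - k.val, by have := k.isLt; omega⟩)
    (τ : Fin n → ℝ)
    (hτu : ∀ k : Fin (n - 2), τ (embIdx n j k) = u k)
    (hτ0 : ∀ i : Fin n, (∀ k, embIdx n j k ≠ i) → τ i = 0)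
    (hz : ∀ k : Fin (n - 2), (hilA n).mulVec τ (embIdx n j k) = 0)
    (hnn : ∀ i : Fin n, (∀ k, embIdx n j k ≠ i) → 0 ≤ (hilA n).mulVec τ i) :
    ∀ i : Fin n, (∀ k, embIdx n j k ≠ i) → 0 < (hilA n).mulVec τ i := by

  haveI : NeZero n := ⟨by omega⟩
  set M1 := missIdx1 n j with hM1
  set M2 := missIdx2 n j with hM2
  have h12 : M2 = M1 + 1 := missIdx2_eq n hn j
  have hone : (1 : Fin n) ≠ 0 := fin_one_ne_zero n hn
  have htwo : (2 : Fin n) ≠ 0 := fin_two_ne_zero n hn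
  have htwo1 : (2 : Fin n) ≠ 1 := fin_two_ne_one n hn
  have hne12 : M1 ≠ M2 := fun h => hone (left_eq_add.mp (h12 ▸ h))
  have hoff : ∀ i : Fin n, i ≠ M1 → i ≠ M2 → (hilA n).mulVec τ i = 0 := by
    intro i a b
    obtain ⟨k, hk⟩ := emb_surj n hn j i a b
    rw [← hk]; exact hz k
  have hτM1 : τ M1 = 0 := hτ0 M1 (fun k => (emb_ne_miss n hn j k).1)
  have hτM2 : τ M2 = 0 := hτ0 M2 (fun k => (emb_ne_miss n hn j k).2)
  have hp2ne1 : M1 + 2 ≠ M1 := fun h => htwo (add_eq_left.mp h)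
  have hp2ne2 : M1 + 2 ≠ M2 := by
    rw [h12]; intro h; exact htwo1 ((add_right_inj M1).mp h)
  have hm1ne1 : M1 - 1 ≠ M1 := fun h => hone (sub_eq_self.mp h)
  have hm1ne2 : M1 - 1 ≠ M2 := by
    rw [h12]; intro h
    have h' : M1 = M1 + 1 + 1 := by rw [← h, sub_add_cancel]
    rw [add_assoc] at h'
    have h2 : (1 : Fin n) + 1 = 0 := left_eq_add.mp h'
    exact htwo (by have := congrArg Fin.val h2; rw [Fin.val_add, fin_val_one n hn, Fin.val_zero, Nat.mod_eq_of_lt (by omega)] at this; omega)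
  obtain ⟨k2, hk2⟩ := emb_surj n hn j (M1 + 2) hp2ne1 hp2ne2
  obtain ⟨km, hkm⟩ := emb_surj n hn j (M1 - 1) hm1ne1 hm1ne2
  have hτp2 : τ (M1 + 2) = u k2 := by rw [← hk2]; exact hτu k2
  have hτm1 : τ (M1 - 1) = u km := by rw [← hkm]; exact hτu km
  have hτsum : ∑ i, τ i = ∑ k, u k := by
    have hstep : ∑ i ∈ Finset.univ.image (embIdx n j), τ i = ∑ i, τ i := by
      apply Finset.sum_subset (Finset.subset_univ _)
      intro i _ hni
      apply hτ0
      intro k hk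
      exact hni (Finset.mem_image.mpr ⟨k, Finset.mem_univ k, hk⟩)
    rw [← hstep, Finset.sum_image (fun x _ y _ h => emb_inj n j h)]
    exact Finset.sum_congr rfl fun k _ => hτu k
  have hS : 0 < ∑ k, u k :=
    Finset.sum_pos (fun k _ => hu k) ⟨⟨0, by omega⟩, Finset.mem_univ _⟩
  have hpair2 : ∀ (x y : Fin n) (f : Fin n → ℝ), x ≠ y →
      (∀ i, i ≠ x → i ≠ y → f i = 0) → ∑ i, f i = f x + f y := by
    intro x y f hxy h0
    rw [← Finset.sum_pair hxy]
    refine (Finset.sum_subset (Finset.subset_univ _) ?_).symm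
    intro i _ hni
    simp only [Finset.mem_insert, Finset.mem_singleton] at hni
    push_neg at hni
    exact h0 i hni.1 hni.2
  have htot : (hilA n).mulVec τ M1 + (hilA n).mulVec τ M2
      = (2 * (1 + 2 * Real.cos (π / (n + 1)) * Real.cos (3 * π / (n + 1)))
        + 2 * (-2 * (Real.cos (π / (n + 1)) + Real.cos (3 * π / (n + 1)))) + 2) * ∑ k, u k := by
    rw [← hτsum, ← hilA_sum_mulVec n hn τ]
    exact (hpair2 M1 M2 _ hne12 hoff).symm
  have hP1 : ∑ i, τ (i + 1) * (hilA n).mulVec τ i = u k2 * (hilA n).mulVec τ M2 := by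
    rw [hpair2 M1 M2 (fun i => τ (i + 1) * (hilA n).mulVec τ i) hne12
      (fun i a b => by show τ (i + 1) * (hilA n).mulVec τ i = 0; rw [hoff i a b, mul_zero])]
    have e1 : τ (M1 + 1) = 0 := by rw [← h12]; exact hτM2
    have e2 : M2 + 1 = M1 + 2 := by rw [h12, add_assoc, show (1 : Fin n) + 1 = 2 from Fin.ext (by rw [Fin.add_def, fin_val_one n hn]; rfl)]
    rw [e1, e2, hτp2]
    ring
  have hP2 : ∑ i, (hilA n).mulVec (fun p => τ (p + 1)) i * τ i
      = u km * (hilA n).mulVec τ M1 := by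
    have hzero : ∀ i : Fin n, i ≠ M1 - 1 → i ≠ M1 →
        (hilA n).mulVec (fun p => τ (p + 1)) i * τ i = 0 := by
      intro i a b
      show (hilA n).mulVec (fun p => τ (p + 1)) i * τ i = 0
      rw [mulVec_shift n hn, hoff (i + 1), zero_mul]
      · intro h; exact a (eq_sub_of_add_eq h)
      · rw [h12]; intro h; exact b ((add_left_inj 1).mp h)
    rw [hpair2 (M1 - 1) M1 _ hm1ne1 hzero]
    rw [mulVec_shift n hn, mulVec_shift n hn, sub_add_cancel, hτm1, hτM1, mul_zero, add_zero]
    ring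
  have hpairing := hilA_pairing n (fun p => τ (p + 1)) τ
  rw [hP1, hP2] at hpairing
  have hL1nn : 0 ≤ (hilA n).mulVec τ M1 := hnn M1 (fun k => (emb_ne_miss n hn j k).1)
  have hL2nn : 0 ≤ (hilA n).mulVec τ M2 := hnn M2 (fun k => (emb_ne_miss n hn j k).2)
  have hCpos := const_pos n hn
  have hsum_pos : 0 < (hilA n).mulVec τ M1 + (hilA n).mulVec τ M2 := by
    rw [htot]; exact mul_pos hCpos hS
  have hL1pos : 0 < (hilA n).mulVec τ M1 := by
    rcases hL1nn.lt_or_eq with h | h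
    · exact h
    · exfalso
      rw [← h, mul_zero] at hpairing
      have hL2z : (hilA n).mulVec τ M2 = 0 := by
        rcases mul_eq_zero.mp hpairing with h' | h'
        · exact absurd h' (ne_of_gt (hu k2))
        · exact h'
      rw [hL2z, ← h] at hsum_pos
      simp at hsum_pos
  have hL2pos : 0 < (hilA n).mulVec τ M2 := by
    have h1 : 0 < u km * (hilA n).mulVec τ M1 := mul_pos (hu km) hL1pos
    rw [← hpairing] at h1
    nlinarith [hu k2]
  intro i hi
  have hiM : i = M1 ∨ i = M2 := by
    by_contra hcon
    push_neg at hcon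
    obtain ⟨k, hk⟩ := emb_surj n hn j i hcon.1 hcon.2
    exact hi k hk
  rcases hiM with h | h <;> rw [h]
  · exact hL1pos
  · exact hL2pos
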